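/- There exists a 2-connected cubic simple graph on 28 vertices that is not traceable. -/

import Mathlib

open SimpleGraph

/-- A graph is cubic if every vertex has degree 3. -/
def IsCubic {V : Type} (G : SimpleGraph V) : Prop :=
  ∀ v : V, (G.neighborSet v).ncard = 3

/-- A graph is 2-connected if it has at least 3 vertices, is connected, and
remains connected after deleting any single vertex. -/
def TwoConnected {V : Type} [Fintype V] (G : SimpleGraph V) : Prop :=
  3 ≤ Fintype.card V ∧ G.Connected ∧
    ∀ v : V, (G.induce ({v}ᶜ : Set V)).Connected

/-- A graph is traceable if it has a hamiltonian path. -/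
def IsTraceable {V : Type} (G : SimpleGraph V) : Prop :=
  ∃ (u v : V) (p : G.Walk u v), p.IsPath ∧ ∀ x : V, x ∈ p.support

def parG : Fin 28 → Fin 28 :=
  ![0, 5, 9, 13, 0, 6, 4, 4, 0, 10, 8, 8, 0, 14, 12, 12, 1, 2, 17, 17, 1, 3, 20, 20, 2, 3, 24, 24]
def rkG : Fin 28 → ℕ :=
  ![0, 4, 4, 4, 1, 3, 2, 2, 1, 3, 2, 2, 1, 3, 2, 2, 5, 5, 6, 6, 5, 5, 6, 6, 5, 5, 6, 6]
def parW : Fin 28 → Fin 28 → Fin 28 :=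
  ![ ![ 0, 1, 17, 21, 6, 1, 5, 5, 10, 2, 9, 9, 14, 3, 13, 13, 1, 18, 16, 16, 1, 22, 20, 20, 2, 3, 24, 24],
  ![ 0, 1, 9, 13, 0, 6, 4, 4, 0, 10, 8, 8, 0, 14, 12, 12, 18, 2, 17, 17, 22, 3, 21, 21, 2, 3, 24, 24],
  ![ 0, 5, 2, 13, 0, 6, 4, 4, 0, 10, 8, 8, 0, 14, 12, 12, 1, 18, 16, 16, 1, 3, 20, 20, 26, 3, 25, 25],
  ![ 0, 5, 9, 3, 0, 6, 4, 4, 0, 10, 8, 8, 0, 14, 12, 12, 1, 2, 17, 17, 1, 22, 20, 20, 2, 26, 24, 24],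
  ![ 0, 16, 9, 13, 4, 1, 5, 5, 0, 10, 8, 8, 0, 14, 12, 12, 18, 2, 17, 17, 22, 3, 21, 21, 2, 3, 24, 24],
  ![ 0, 16, 9, 13, 0, 5, 4, 4, 0, 10, 8, 8, 0, 14, 12, 12, 18, 2, 17, 17, 22, 3, 21, 21, 2, 3, 24, 24],
  ![ 0, 5, 9, 13, 0, 7, 6, 4, 0, 10, 8, 8, 0, 14, 12, 12, 1, 2, 17, 17, 1, 3, 20, 20, 2, 3, 24, 24],
  ![ 0, 5, 9, 13, 0, 6, 4, 7, 0, 10, 8, 8, 0, 14, 12, 12, 1, 2, 17, 17, 1, 3, 20, 20, 2, 3, 24, 24],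
  ![ 0, 5, 17, 13, 0, 6, 4, 4, 8, 2, 9, 9, 0, 14, 12, 12, 1, 18, 16, 16, 1, 3, 20, 20, 26, 3, 25, 25],
  ![ 0, 5, 17, 13, 0, 6, 4, 4, 0, 9, 8, 8, 0, 14, 12, 12, 1, 18, 16, 16, 1, 3, 20, 20, 26, 3, 25, 25],
  ![ 0, 5, 9, 13, 0, 6, 4, 4, 0, 11, 10, 8, 0, 14, 12, 12, 1, 2, 17, 17, 1, 3, 20, 20, 2, 3, 24, 24],
  ![ 0, 5, 9, 13, 0, 6, 4, 4, 0, 10, 8, 11, 0, 14, 12, 12, 1, 2, 17, 17, 1, 3, 20, 20, 2, 3, 24, 24],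
  ![ 0, 5, 9, 25, 0, 6, 4, 4, 0, 10, 8, 8, 12, 3, 13, 13, 1, 2, 17, 17, 1, 22, 20, 20, 2, 26, 24, 24],
  ![ 0, 5, 9, 25, 0, 6, 4, 4, 0, 10, 8, 8, 0, 13, 12, 12, 1, 2, 17, 17, 1, 22, 20, 20, 2, 26, 24, 24],
  ![ 0, 5, 9, 13, 0, 6, 4, 4, 0, 10, 8, 8, 0, 15, 14, 12, 1, 2, 17, 17, 1, 3, 20, 20, 2, 3, 24, 24],
  ![ 0, 5, 9, 13, 0, 6, 4, 4, 0, 10, 8, 8, 0, 14, 12, 15, 1, 2, 17, 17, 1, 3, 20, 20, 2, 3, 24, 24],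
  ![ 0, 5, 9, 13, 0, 6, 4, 4, 0, 10, 8, 8, 0, 14, 12, 12, 16, 2, 17, 17, 1, 3, 20, 20, 2, 3, 24, 24],
  ![ 0, 5, 9, 13, 0, 6, 4, 4, 0, 10, 8, 8, 0, 14, 12, 12, 1, 17, 16, 16, 1, 3, 20, 20, 2, 3, 24, 24],
  ![ 0, 5, 9, 13, 0, 6, 4, 4, 0, 10, 8, 8, 0, 14, 12, 12, 1, 2, 18, 17, 1, 3, 20, 20, 2, 3, 24, 24],
  ![ 0, 5, 9, 13, 0, 6, 4, 4, 0, 10, 8, 8, 0, 14, 12, 12, 1, 2, 17, 19, 1, 3, 20, 20, 2, 3, 24, 24],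
  ![ 0, 5, 9, 13, 0, 6, 4, 4, 0, 10, 8, 8, 0, 14, 12, 12, 1, 2, 17, 17, 20, 3, 21, 21, 2, 3, 24, 24],
  ![ 0, 5, 9, 13, 0, 6, 4, 4, 0, 10, 8, 8, 0, 14, 12, 12, 1, 2, 17, 17, 1, 21, 20, 20, 2, 3, 24, 24],
  ![ 0, 5, 9, 13, 0, 6, 4, 4, 0, 10, 8, 8, 0, 14, 12, 12, 1, 2, 17, 17, 1, 3, 22, 20, 2, 3, 24, 24],
  ![ 0, 5, 9, 13, 0, 6, 4, 4, 0, 10, 8, 8, 0, 14, 12, 12, 1, 2, 17, 17, 1, 3, 20, 23, 2, 3, 24, 24],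
  ![ 0, 5, 9, 13, 0, 6, 4, 4, 0, 10, 8, 8, 0, 14, 12, 12, 1, 2, 17, 17, 1, 3, 20, 20, 24, 3, 25, 25],
  ![ 0, 5, 9, 13, 0, 6, 4, 4, 0, 10, 8, 8, 0, 14, 12, 12, 1, 2, 17, 17, 1, 3, 20, 20, 2, 25, 24, 24],
  ![ 0, 5, 9, 13, 0, 6, 4, 4, 0, 10, 8, 8, 0, 14, 12, 12, 1, 2, 17, 17, 1, 3, 20, 20, 2, 3, 26, 24],
  ![ 0, 5, 9, 13, 0, 6, 4, 4, 0, 10, 8, 8, 0, 14, 12, 12, 1, 2, 17, 17, 1, 3, 20, 20, 2, 3, 24, 27]]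
def rkW : Fin 28 → Fin 28 → ℕ :=
  ![ ![ 0, 0, 4, 4, 3, 1, 2, 2, 7, 5, 6, 6, 7, 5, 6, 6, 1, 3, 2, 2, 1, 3, 2, 2, 5, 5, 6, 6],
  ![ 0, 0, 4, 4, 1, 3, 2, 2, 1, 3, 2, 2, 1, 3, 2, 2, 7, 5, 6, 6, 7, 5, 6, 6, 5, 5, 6, 6],
  ![ 0, 4, 0, 4, 1, 3, 2, 2, 1, 3, 2, 2, 1, 3, 2, 2, 5, 7, 6, 6, 5, 5, 6, 6, 7, 5, 6, 6],
  ![ 0, 4, 4, 0, 1, 3, 2, 2, 1, 3, 2, 2, 1, 3, 2, 2, 5, 5, 6, 6, 5, 7, 6, 6, 5, 7, 6, 6],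
  ![ 0, 8, 4, 4, 0, 9, 10, 10, 1, 3, 2, 2, 1, 3, 2, 2, 7, 5, 6, 6, 7, 5, 6, 6, 5, 5, 6, 6],
  ![ 0, 8, 4, 4, 1, 0, 2, 2, 1, 3, 2, 2, 1, 3, 2, 2, 7, 5, 6, 6, 7, 5, 6, 6, 5, 5, 6, 6],
  ![ 0, 4, 4, 4, 1, 3, 0, 2, 1, 3, 2, 2, 1, 3, 2, 2, 5, 5, 6, 6, 5, 5, 6, 6, 5, 5, 6, 6],
  ![ 0, 4, 4, 4, 1, 3, 2, 0, 1, 3, 2, 2, 1, 3, 2, 2, 5, 5, 6, 6, 5, 5, 6, 6, 5, 5, 6, 6],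
  ![ 0, 4, 8, 4, 1, 3, 2, 2, 0, 9, 10, 10, 1, 3, 2, 2, 5, 7, 6, 6, 5, 5, 6, 6, 7, 5, 6, 6],
  ![ 0, 4, 8, 4, 1, 3, 2, 2, 1, 0, 2, 2, 1, 3, 2, 2, 5, 7, 6, 6, 5, 5, 6, 6, 7, 5, 6, 6],
  ![ 0, 4, 4, 4, 1, 3, 2, 2, 1, 3, 0, 2, 1, 3, 2, 2, 5, 5, 6, 6, 5, 5, 6, 6, 5, 5, 6, 6],
  ![ 0, 4, 4, 4, 1, 3, 2, 2, 1, 3, 2, 0, 1, 3, 2, 2, 5, 5, 6, 6, 5, 5, 6, 6, 5, 5, 6, 6],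
  ![ 0, 4, 4, 8, 1, 3, 2, 2, 1, 3, 2, 2, 0, 9, 10, 10, 5, 5, 6, 6, 5, 7, 6, 6, 5, 7, 6, 6],
  ![ 0, 4, 4, 8, 1, 3, 2, 2, 1, 3, 2, 2, 1, 0, 2, 2, 5, 5, 6, 6, 5, 7, 6, 6, 5, 7, 6, 6],
  ![ 0, 4, 4, 4, 1, 3, 2, 2, 1, 3, 2, 2, 1, 3, 0, 2, 5, 5, 6, 6, 5, 5, 6, 6, 5, 5, 6, 6],
  ![ 0, 4, 4, 4, 1, 3, 2, 2, 1, 3, 2, 2, 1, 3, 2, 0, 5, 5, 6, 6, 5, 5, 6, 6, 5, 5, 6, 6],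
  ![ 0, 4, 4, 4, 1, 3, 2, 2, 1, 3, 2, 2, 1, 3, 2, 2, 0, 5, 6, 6, 5, 5, 6, 6, 5, 5, 6, 6],
  ![ 0, 4, 4, 4, 1, 3, 2, 2, 1, 3, 2, 2, 1, 3, 2, 2, 5, 0, 6, 6, 5, 5, 6, 6, 5, 5, 6, 6],
  ![ 0, 4, 4, 4, 1, 3, 2, 2, 1, 3, 2, 2, 1, 3, 2, 2, 5, 5, 0, 6, 5, 5, 6, 6, 5, 5, 6, 6],
  ![ 0, 4, 4, 4, 1, 3, 2, 2, 1, 3, 2, 2, 1, 3, 2, 2, 5, 5, 6, 0, 5, 5, 6, 6, 5, 5, 6, 6],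
  ![ 0, 4, 4, 4, 1, 3, 2, 2, 1, 3, 2, 2, 1, 3, 2, 2, 5, 5, 6, 6, 0, 5, 6, 6, 5, 5, 6, 6],
  ![ 0, 4, 4, 4, 1, 3, 2, 2, 1, 3, 2, 2, 1, 3, 2, 2, 5, 5, 6, 6, 5, 0, 6, 6, 5, 5, 6, 6],
  ![ 0, 4, 4, 4, 1, 3, 2, 2, 1, 3, 2, 2, 1, 3, 2, 2, 5, 5, 6, 6, 5, 5, 0, 6, 5, 5, 6, 6],
  ![ 0, 4, 4, 4, 1, 3, 2, 2, 1, 3, 2, 2, 1, 3, 2, 2, 5, 5, 6, 6, 5, 5, 6, 0, 5, 5, 6, 6],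
  ![ 0, 4, 4, 4, 1, 3, 2, 2, 1, 3, 2, 2, 1, 3, 2, 2, 5, 5, 6, 6, 5, 5, 6, 6, 0, 5, 6, 6],
  ![ 0, 4, 4, 4, 1, 3, 2, 2, 1, 3, 2, 2, 1, 3, 2, 2, 5, 5, 6, 6, 5, 5, 6, 6, 5, 0, 6, 6],
  ![ 0, 4, 4, 4, 1, 3, 2, 2, 1, 3, 2, 2, 1, 3, 2, 2, 5, 5, 6, 6, 5, 5, 6, 6, 5, 5, 0, 6],
  ![ 0, 4, 4, 4, 1, 3, 2, 2, 1, 3, 2, 2, 1, 3, 2, 2, 5, 5, 6, 6, 5, 5, 6, 6, 5, 5, 6, 0]]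
def edges : List (ℕ × ℕ) :=
  [(4, 6), (4, 7), (5, 6), (5, 7), (6, 7), (0, 4), (1, 5), (8, 10), (8, 11), (9, 10), (9, 11), (10, 11), (0, 8), (2, 9), (12, 14), (12, 15), (13, 14), (13, 15), (14, 15), (0, 12), (3, 13), (16, 18), (16, 19), (17, 18), (17, 19), (18, 19), (1, 16), (2, 17), (20, 22), (20, 23), (21, 22), (21, 23), (22, 23), (1, 20), (3, 21), (24, 26), (24, 27), (25, 26), (25, 27), (26, 27), (2, 24), (3, 25)]

def adjB (a b : Fin 28) : Bool :=
  decide ((a.val, b.val) ∈ edges) || decide ((b.val, a.val) ∈ edges)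

lemma adjB_symm : ∀ a b : Fin 28, adjB a b = true → adjB b a = true := by decide
lemma adjB_irrefl : ∀ a : Fin 28, ¬ adjB a a = true := by decide

def myG : SimpleGraph (Fin 28) where
  Adj a b := adjB a b = true
  symm := ⟨fun a b h => adjB_symm a b h⟩
  loopless := ⟨fun a h => adjB_irrefl a h⟩

instance : DecidableRel myG.Adj := fun _ _ => instDecidableEqBool _ _

/-- block id: cores → 6, diamond k → k -/
def blk (v : Fin 28) : ℕ := if v.val < 4 then 6 else (v.val - 4) / 4

lemma tree_conn {V : Type} [Fintype V] (G : SimpleGraph V) (r : V) (par : V → V)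
    (rk : V → ℕ) (h : ∀ v, v ≠ r → G.Adj v (par v) ∧ rk (par v) < rk v) :
    G.Connected := by
  have hreach : ∀ n (v : V), rk v = n → G.Reachable v r := by
    intro n
    induction n using Nat.strong_induction_on with
    | _ n ih =>
      intro v hn
      by_cases hv : v = r
      · rw [hv]
      · obtain ⟨hadj, hlt⟩ := h v hv
        exact (Adj.reachable hadj).trans (ih _ (hn ▸ hlt) _ rfl)
  rw [connected_iff]
  exact ⟨fun u v => (hreach _ u rfl).trans (hreach _ v rfl).symm, ⟨r⟩⟩

lemma myG_conn : myG.Connected := by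
  refine tree_conn myG 0 parG rkG ?_
  decide

def rootW (w : Fin 28) : Fin 28 := if w = 0 then 1 else 0

lemma parW_ok : ∀ w v : Fin 28, v ≠ w → v ≠ rootW w →
    myG.Adj v (parW w v) ∧ parW w v ≠ w ∧ rkW w (parW w v) < rkW w v := by
  decide

lemma myG_del_conn (w : Fin 28) : (myG.induce ({w}ᶜ : Set (Fin 28))).Connected := by
  have hroot : (rootW w : Fin 28) ≠ w := by revert w; decide
  refine tree_conn _ (⟨rootW w, hroot⟩ : ({w}ᶜ : Set (Fin 28)))
    (fun v => if hv : v.val = rootW w then v else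
      ⟨parW w v.val, (parW_ok w v.val v.prop hv).2.1⟩)
    (fun v => rkW w v.val) ?_
  rintro ⟨v, hv⟩ hne
  have hvr : v ≠ rootW w := fun h => hne (Subtype.ext h)
  obtain ⟨hadj, hnw, hlt⟩ := parW_ok w v hv hvr
  simp only [hvr, dif_neg, not_false_iff]
  exact ⟨hadj, hlt⟩

lemma blk_adj : ∀ a b : Fin 28, adjB a b = true →
    blk a = 6 ∨ blk b = 6 ∨ blk a = blk b := by decide

lemma cross (L : List (Fin 28)) (hc : L.Chain' myG.Adj) :
    ∀ n i j (hi : i < L.length) (hj : j < L.length), i < j → j - i = n →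
      blk (L.get ⟨i, hi⟩) ≠ 6 → blk (L.get ⟨j, hj⟩) ≠ 6 →
      blk (L.get ⟨i, hi⟩) ≠ blk (L.get ⟨j, hj⟩) →
      ∃ t, ∃ ht : t < L.length, i < t ∧ t < j ∧ blk (L.get ⟨t, ht⟩) = 6 := by
  intro n
  induction n using Nat.strong_induction_on with
  | _ n ih =>
    intro i j hi hj hij hd h6i h6j hne
    have hi1 : i + 1 < L.length := by omega
    have hadj : myG.Adj (L.get ⟨i, hi⟩) (L.get ⟨i+1, hi1⟩) := by
      rw [List.Chain', List.isChain_iff_getElem] at hc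
      exact hc i (by omega)
    by_cases h6 : blk (L.get ⟨i+1, hi1⟩) = 6
    · rcases Nat.lt_or_ge (i+1) j with hlt | hge
      · exact ⟨i+1, hi1, by omega, hlt, h6⟩
      · exfalso
        have hje : j = i + 1 := by omega
        subst hje
        exact h6j h6
    · have heq : blk (L.get ⟨i+1, hi1⟩) = blk (L.get ⟨i, hi⟩) := by
        rcases blk_adj _ _ hadj with h | h | h
        · exact absurd h h6i
        · exact absurd h h6
        · exact h.symm
      rcases Nat.lt_or_ge (i+1) j with hlt | hge
      · obtain ⟨t, ht, h1, h2, h3⟩ :=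
          ih (j - (i+1)) (by omega) (i+1) j hi1 hj hlt rfl h6 h6j (heq ▸ hne)
        exact ⟨t, ht, by omega, h2, h3⟩
      · exfalso
        have hje : j = i + 1 := by omega
        subst hje
        exact hne heq.symm

def dvert (k : Fin 6) : Fin 28 := ⟨4 + 4 * k.val, by omega⟩

lemma blk_dvert : ∀ k : Fin 6, blk (dvert k) = k.val := by decide

lemma myG_not_traceable : ¬ IsTraceable myG := by
  rintro ⟨u, v, p, hp, hmem⟩
  set L := p.support with hL
  have hnd : L.Nodup := hp.support_nodup
  have hc : L.Chain' myG.Adj := p.isChain_adj_support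
  have hmem' : ∀ k : Fin 6, dvert k ∈ L := fun k => hmem _
  set f : Fin 6 → ℕ := fun k => L.idxOf (dvert k) with hf
  have hflt : ∀ k, f k < L.length := fun k => List.idxOf_lt_length_iff.mpr (hmem' k)
  have hblkf : ∀ (k : Fin 6) (h : f k < L.length), blk (L.get ⟨f k, h⟩) = k.val := by
    intro k h
    rw [show L.get ⟨f k, h⟩ = dvert k from List.idxOf_get h]
    exact blk_dvert k
  have hfinj : Function.Injective f := by
    intro a b hab
    have h1 := hblkf a (hflt a)
    have h2 := hblkf b (hflt b)
    rw [show (⟨f a, hflt a⟩ : Fin L.length) = ⟨f b, hflt b⟩ from Fin.ext hab] at h1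
    exact Fin.ext (h1 ▸ h2 ▸ rfl)
  set σ := Tuple.sort f with hσ
  have hgs : StrictMono (f ∘ σ) :=
    (Tuple.monotone_sort f).strictMono_of_injective (hfinj.comp σ.injective)
  have hcross : ∀ j : Fin 5, ∃ t, ∃ ht : t < L.length,
      f (σ j.castSucc) < t ∧ t < f (σ j.succ) ∧ blk (L.get ⟨t, ht⟩) = 6 := by
    intro j
    have hlt : f (σ j.castSucc) < f (σ j.succ) := hgs (Fin.castSucc_lt_succ (i := j))
    refine cross L hc (f (σ j.succ) - f (σ j.castSucc)) _ _ (hflt _) (hflt _)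
      hlt rfl ?_ ?_ ?_
    · rw [hblkf]
      have := (σ j.castSucc).isLt; omega
    · rw [hblkf]
      have := (σ j.succ).isLt; omega
    · rw [hblkf, hblkf]
      intro h
      have h2 := σ.injective (Fin.ext h)
      rw [Fin.ext_iff, Fin.coe_castSucc, Fin.val_succ] at h2
      omega
  choose c hct hc1 hc2 hc3 using hcross
  have hcmono : StrictMono c := by
    intro a b hab
    calc c a < f (σ a.succ) := hc2 a
    _ ≤ f (σ b.castSucc) := hgs.monotone (by
        rw [Fin.le_def]
        rw [Fin.lt_def] at hab
        simp only [Fin.val_succ, Fin.val_castSucc]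
        omega)
    _ < c b := hc1 b
  set S6 : Finset (Fin 28) := Finset.univ.filter (fun v => blk v = 6) with hS6
  have hS6card : S6.card = 4 := by decide
  have hcard : (Finset.univ : Finset (Fin 5)).card ≤ S6.card := by
    apply Finset.card_le_card_of_injOn (fun j => L.get ⟨c j, hct j⟩)
    · intro j _
      simp only [hS6, Finset.coe_filter, Finset.mem_univ, true_and, Set.mem_setOf_eq]
      exact hc3 j
    · intro a _ b _ hab
      have h1 := (List.Nodup.get_inj_iff hnd).mp hab
      rw [Fin.ext_iff] at h1
      exact hcmono.injective h1
  rw [hS6card] at hcard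
  simp at hcard

theorem stmt_11 :
    ∃ G : SimpleGraph (Fin 28), IsCubic G ∧ TwoConnected G ∧ ¬ IsTraceable G := by
  refine ⟨myG, ?_, ⟨?_, myG_conn, myG_del_conn⟩, myG_not_traceable⟩
  · have hdeg : ∀ v : Fin 28, myG.degree v = 3 := by decide
    intro v
    have h : myG.neighborSet v = ↑(myG.neighborFinset v) := by
      simp [neighborFinset_def]
    rw [h, Set.ncard_coe_finset]
    exact hdeg v
  · simp
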